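/- Let d ≥ 1, let x_1, …, x_{d+1} ∈ ℝ^d be affinely independent, let τ be their closed convex hull with Lebesgue measure |τ|, and let λ_1, …, λ_{d+1} be the barycentric coordinate functions of the simplex. Then for every coefficient vector u = (u_1, …, u_{d+1}) ∈ ℝ^{d+1}, the nodal basis is L²-stable on τ in the Riesz sense with explicit constants: (|τ| / ((d+1)(d+2))) ∑_{i=1}^{d+1} u_i² ≤ ∫_τ ( ∑_{i=1}^{d+1} u_i λ_i(x) )² dx ≤ (|τ| / (d+1)) ∑_{i=1}^{d+1} u_i². -/

import Mathlib

open MeasureTheory Set Pointwise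

/-- The "corner simplex" in `Fin d → ℝ`. -/
def Sim (d : ℕ) : Set (Fin d → ℝ) := {t | (∀ i, 0 ≤ t i) ∧ ∑ i, t i ≤ 1}

lemma isClosed_Sim (d : ℕ) : IsClosed (Sim d) := by
  have h1 : IsClosed {t : Fin d → ℝ | ∀ i, 0 ≤ t i} := by
    have : {t : Fin d → ℝ | ∀ i, 0 ≤ t i} = ⋂ i, {t | 0 ≤ t i} := by ext; simp
    rw [this]
    exact isClosed_iInter fun i => isClosed_le continuous_const (continuous_apply i)
  have h2 : IsClosed {t : Fin d → ℝ | ∑ i, t i ≤ 1} :=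
    isClosed_le (by continuity) continuous_const
  exact h1.inter h2

lemma measurableSet_Sim (d : ℕ) : MeasurableSet (Sim d) := (isClosed_Sim d).measurableSet

lemma isCompact_Sim (d : ℕ) : IsCompact (Sim d) := by
  have hsub : Sim d ⊆ Set.pi Set.univ (fun _ : Fin d => Set.Icc (0:ℝ) 1) := by
    rintro t ⟨h1, h2⟩ i _
    refine ⟨h1 i, ?_⟩
    calc t i ≤ ∑ j, t j := Finset.single_le_sum (fun j _ => h1 j) (Finset.mem_univ i)
    _ ≤ 1 := h2
  exact (isCompact_univ_pi fun _ => isCompact_Icc).of_isClosed_subset (isClosed_Sim d) hsub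

lemma integrableOn_Sim {d : ℕ} {g : (Fin d → ℝ) → ℝ} (hg : Continuous g) :
    IntegrableOn g (Sim d) := hg.continuousOn.integrableOn_compact (isCompact_Sim d)

lemma sim_integral : ∀ (d : ℕ) (c : ℝ) (a : Fin d → ℝ),
    ∫ t in Sim d, (c + ∑ i, a i * t i) ^ 2 =
      (((d:ℝ)+1)*((d:ℝ)+2)*c^2 + 2*((d:ℝ)+2)*c*(∑ i, a i) + (∑ i, a i)^2 + ∑ i, (a i)^2)
        / (Nat.factorial (d+2) : ℝ) := by
  intro d
  induction d with
  | zero =>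
    intro c a
    have h1 : Sim 0 = Set.univ := by
      ext t; simp [Sim]
    have h2 : (volume : Measure (Fin 0 → ℝ)) Set.univ = 1 := by
      rw [MeasureTheory.volume_pi, MeasureTheory.Measure.pi_univ]
      simp
    rw [h1]
    simp only [Finset.univ_eq_empty, Finset.sum_empty, add_zero]
    rw [setIntegral_const]
    rw [measureReal_def, h2]
    norm_num [Nat.factorial]
  | succ d IH =>
    intro c a
    push_cast
    set φ : (Fin (d+1) → ℝ) → ℝ := fun t => (c + ∑ i, a i * t i)^2 with hφ
    have hφc : Continuous φ :=
      (continuous_const.add (continuous_finset_sum _ fun i _ =>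
        continuous_const.mul (continuous_apply i))).pow 2
    have hF : Integrable (Set.indicator (Sim (d+1)) φ) :=
      (integrableOn_Sim hφc).integrable_indicator (measurableSet_Sim _)
    set e := MeasurableEquiv.piFinSuccAbove (fun _ : Fin (d+1) => ℝ) 0 with he
    have hmp : MeasurePreserving (⇑e.symm) volume volume :=
      (volume_preserving_piFinSuccAbove (fun _ : Fin (d+1) => ℝ) 0).symm
    have hsymm : ∀ p : ℝ × (Fin d → ℝ), e.symm p = Fin.cons p.1 p.2 := by
      intro p
      simp [he, MeasurableEquiv.piFinSuccAbove, Fin.insertNth_zero', Fin.consEquiv]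
    have step1 : ∫ t in Sim (d+1), φ t
        = ∫ p : ℝ × (Fin d → ℝ), Set.indicator (Sim (d+1)) φ (Fin.cons p.1 p.2) := by
      rw [← integral_indicator (measurableSet_Sim _),
        ← hmp.integral_comp e.symm.measurableEmbedding (Set.indicator (Sim (d+1)) φ)]
      simp only [hsymm]
    have hF2 : Integrable (fun p : ℝ × (Fin d → ℝ) => Set.indicator (Sim (d+1)) φ (Fin.cons p.1 p.2))
        (volume : Measure (ℝ × (Fin d → ℝ))) := by
      have := (hmp.integrable_comp_emb e.symm.measurableEmbedding).2 hF
      refine this.congr (Filter.Eventually.of_forall fun p => ?_)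
      rw [Function.comp_apply, hsymm p]
    have step2 : ∫ p : ℝ × (Fin d → ℝ), Set.indicator (Sim (d+1)) φ (Fin.cons p.1 p.2)
        = ∫ s : ℝ, ∫ t : Fin d → ℝ, Set.indicator (Sim (d+1)) φ (Fin.cons s t) := by
      rw [Measure.volume_eq_prod] at hF2 ⊢
      exact integral_prod _ hF2
    rw [step1, step2]
    -- abbreviations
    set S' : ℝ := ∑ i : Fin d, a i.succ with hS'
    set Q' : ℝ := ∑ i : Fin d, (a i.succ)^2 with hQ'
    set P : ℝ → ℝ := fun s => (1-s)^d *
        ((((d:ℝ)+1)*((d:ℝ)+2)*(c + a 0 * s)^2 + 2*((d:ℝ)+2)*(c + a 0 * s)*((1-s) * S')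
          + ((1-s)*S')^2 + (1-s)^2*Q') / (Nat.factorial (d+2) : ℝ)) with hP
    have hmem : ∀ (s : ℝ) (t : Fin d → ℝ),
        (Fin.cons s t ∈ Sim (d+1)) ↔ (0 ≤ s ∧ (∀ i, 0 ≤ t i) ∧ s + ∑ i, t i ≤ 1) := by
      intro s t
      simp only [Sim, Set.mem_setOf_eq, Fin.forall_fin_succ, Fin.cons_zero, Fin.cons_succ,
        Fin.sum_univ_succ]
      tauto
    have hφcons : ∀ (s : ℝ) (t : Fin d → ℝ),
        φ (Fin.cons s t) = (c + a 0 * s + ∑ i, a i.succ * t i)^2 := by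
      intro s t
      simp only [hφ, Fin.sum_univ_succ, Fin.cons_zero, Fin.cons_succ]
      ring
    have hG0 : ∀ s : ℝ, s ∉ Icc (0:ℝ) 1 →
        (∫ t : Fin d → ℝ, Set.indicator (Sim (d+1)) φ (Fin.cons s t)) = 0 := by
      intro s hs
      have : ∀ t : Fin d → ℝ, Set.indicator (Sim (d+1)) φ (Fin.cons s t) = 0 := by
        intro t
        apply Set.indicator_of_notMem
        rw [hmem]
        rintro ⟨h0, h1, h2⟩
        apply hs
        refine ⟨h0, ?_⟩
        have hsum : (0:ℝ) ≤ ∑ i, t i := Finset.sum_nonneg fun i _ => h1 i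
        linarith
      simp only [this, integral_zero]
    have hGP : ∀ s ∈ Ico (0:ℝ) 1,
        (∫ t : Fin d → ℝ, Set.indicator (Sim (d+1)) φ (Fin.cons s t)) = P s := by
      intro s hs
      have hr : (0:ℝ) < 1 - s := by linarith [hs.2]
      have hsetEq : {t : Fin d → ℝ | (∀ i, 0 ≤ t i) ∧ ∑ i, t i ≤ 1 - s} = (1-s) • Sim d := by
        ext t
        rw [Set.mem_smul_set_iff_inv_smul_mem₀ hr.ne']
        simp only [Sim, Set.mem_setOf_eq, Pi.smul_apply, smul_eq_mul]
        constructor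
        · rintro ⟨h1, h2⟩
          constructor
          · intro i
            exact mul_nonneg (by positivity) (h1 i)
          · rw [← Finset.mul_sum]
            rw [inv_mul_le_iff₀ hr, mul_one]
            exact h2
        · rintro ⟨h1, h2⟩
          constructor
          · intro i
            have h3 := mul_nonneg hr.le (h1 i)
            rwa [← mul_assoc, mul_inv_cancel₀ hr.ne', one_mul] at h3
          · rw [← Finset.mul_sum, inv_mul_le_iff₀ hr, mul_one] at h2
            exact h2
      have hstepA : (fun t : Fin d → ℝ => Set.indicator (Sim (d+1)) φ (Fin.cons s t))
          = Set.indicator ((1-s) • Sim d) (fun t => (c + a 0 * s + ∑ i, a i.succ * t i)^2) := by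
        funext t
        rw [← hsetEq]
        have hiff : (Fin.cons s t ∈ Sim (d+1)) ↔
            (t ∈ {t : Fin d → ℝ | (∀ i, 0 ≤ t i) ∧ ∑ i, t i ≤ 1 - s}) := by
          rw [hmem]
          simp only [Set.mem_setOf_eq]
          constructor
          · rintro ⟨_, h1, h2⟩; exact ⟨h1, by linarith⟩
          · rintro ⟨h1, h2⟩; exact ⟨hs.1, h1, by linarith⟩
        by_cases hmemt : Fin.cons s t ∈ Sim (d+1)
        · rw [Set.indicator_of_mem hmemt, Set.indicator_of_mem (hiff.mp hmemt), hφcons]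
        · rw [Set.indicator_of_notMem hmemt,
            Set.indicator_of_notMem (fun h => hmemt (hiff.mpr h))]
      have hmeas : MeasurableSet ((1-s) • Sim d) := by
        rw [← hsetEq]
        have h1 : IsClosed {t : Fin d → ℝ | ∀ i, 0 ≤ t i} := by
          have hset : {t : Fin d → ℝ | ∀ i, 0 ≤ t i} = ⋂ i, {t | 0 ≤ t i} := by ext; simp
          rw [hset]
          exact isClosed_iInter fun i => isClosed_le continuous_const (continuous_apply i)
        exact (h1.inter (isClosed_le (continuous_finset_sum _ fun i _ => continuous_apply i) continuous_const)).measurableSet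
      rw [hstepA, integral_indicator hmeas]
      have hcv := MeasureTheory.Measure.setIntegral_comp_smul_of_pos
        (volume : Measure (Fin d → ℝ))
        (fun t : Fin d → ℝ => (c + a 0 * s + ∑ i, a i.succ * t i)^2) (Sim d) hr
      rw [Module.finrank_fintype_fun_eq_card, Fintype.card_fin] at hcv
      have hrd : (0:ℝ) < (1-s)^d := pow_pos hr d
      rw [smul_eq_mul] at hcv
      have hcv2 : ∫ t in (1-s) • Sim d, (c + a 0 * s + ∑ i, a i.succ * t i)^2
          = (1-s)^d * ∫ t in Sim d, (c + a 0 * s + ∑ i, a i.succ * ((1-s) • t) i)^2 := by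
        rw [hcv]
        rw [← mul_assoc, mul_inv_cancel₀ hrd.ne', one_mul]
      rw [hcv2]
      have hinner : ∫ t in Sim d, (c + a 0 * s + ∑ i, a i.succ * ((1-s) • t) i)^2
          = ∫ t in Sim d, ((c + a 0 * s) + ∑ i, ((1-s) * a i.succ) * t i)^2 := by
        apply setIntegral_congr_fun (measurableSet_Sim d)
        intro t _
        have hterm : ∀ i : Fin d, a i.succ * ((1-s) • t) i = ((1-s) * a i.succ) * t i :=
          fun i => by simp only [Pi.smul_apply, smul_eq_mul]; ring
        simp only [hterm]
      rw [hinner, IH (c + a 0 * s) (fun i => (1-s) * a i.succ)]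
      have hsum1 : ∑ i : Fin d, (1-s) * a i.succ = (1-s) * S' := by rw [hS', Finset.mul_sum]
      have hsum2 : ∑ i : Fin d, ((1-s) * a i.succ)^2 = (1-s)^2 * Q' := by
        rw [hQ', Finset.mul_sum]
        apply Finset.sum_congr rfl
        intro i _
        ring
      rw [hsum1, hsum2, hP]
    -- outer integral
    have houter : (fun s : ℝ => ∫ t : Fin d → ℝ, Set.indicator (Sim (d+1)) φ (Fin.cons s t))
        = Set.indicator (Icc (0:ℝ) 1)
          (fun s => ∫ t : Fin d → ℝ, Set.indicator (Sim (d+1)) φ (Fin.cons s t)) := by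
      funext s
      by_cases hs : s ∈ Icc (0:ℝ) 1
      · rw [Set.indicator_of_mem hs]
      · rw [Set.indicator_of_notMem hs, hG0 s hs]
    rw [houter, integral_indicator measurableSet_Icc, integral_Icc_eq_integral_Ioo]
    have hcongr : ∫ s in Ioo (0:ℝ) 1, (∫ t : Fin d → ℝ, Set.indicator (Sim (d+1)) φ (Fin.cons s t))
        = ∫ s in Ioo (0:ℝ) 1, P s := by
      apply setIntegral_congr_fun measurableSet_Ioo
      intro s hs
      exact hGP s ⟨hs.1.le, hs.2⟩
    rw [hcongr, ← integral_Ioc_eq_integral_Ioo, ← intervalIntegral.integral_of_le zero_le_one]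
    -- compute the interval integral
    set A : ℝ := ((d:ℝ)+1)*((d:ℝ)+2)*(c + a 0)^2 with hA
    set B : ℝ := -2*((d:ℝ)+1)*((d:ℝ)+2)*(c + a 0)*(a 0) + 2*((d:ℝ)+2)*(c + a 0)*S' with hB
    set C : ℝ := ((d:ℝ)+1)*((d:ℝ)+2)*(a 0)^2 - 2*((d:ℝ)+2)*(a 0)*S' + S'^2 + Q' with hC
    have hPq : ∀ s : ℝ, P s
        = (A*(1-s)^d + B*(1-s)^(d+1) + C*(1-s)^(d+2)) / (Nat.factorial (d+2) : ℝ) := by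
      intro s
      rw [hP, hA, hB, hC]
      ring
    have hqint : ∫ s in (0:ℝ)..1, P s
        = (A/((d:ℝ)+1) + B/((d:ℝ)+2) + C/((d:ℝ)+3)) / (Nat.factorial (d+2) : ℝ) := by
      set q : ℝ → ℝ := fun u => (A*u^d + B*u^(d+1) + C*u^(d+2)) / (Nat.factorial (d+2) : ℝ)
        with hq
      have h2 : ∫ s in (1-1:ℝ)..(1-0:ℝ), q s = ∫ s in (0:ℝ)..1, q s := by norm_num
      have h1 : ∫ s in (0:ℝ)..1, P s = ∫ s in (0:ℝ)..1, q s := by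
        rw [← h2, ← intervalIntegral.integral_comp_sub_left q 1]
        apply intervalIntegral.integral_congr
        intro s _
        rw [hPq s, hq]
      rw [h1, hq]
      simp only
      rw [intervalIntegral.integral_div]
      congr 1
      have hIpow : ∀ n : ℕ, IntervalIntegrable (fun s : ℝ => s ^ n) volume 0 1 :=
        fun n => (continuous_pow n).intervalIntegrable 0 1
      rw [intervalIntegral.integral_add (((hIpow d).const_mul A).add ((hIpow (d+1)).const_mul B))
          ((hIpow (d+2)).const_mul C),
        intervalIntegral.integral_add ((hIpow d).const_mul A) ((hIpow (d+1)).const_mul B),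
        intervalIntegral.integral_const_mul, intervalIntegral.integral_const_mul,
        intervalIntegral.integral_const_mul, integral_pow, integral_pow, integral_pow]
      push_cast
      rw [one_pow, zero_pow (by omega : d + 1 ≠ 0), zero_pow (by omega : d + 1 + 1 ≠ 0),
        zero_pow (by omega : d + 2 + 1 ≠ 0)]
      ring
    rw [hqint]
    -- final algebra
    have hfact : (Nat.factorial (d+1+2) : ℝ) = ((d:ℝ)+3) * (Nat.factorial (d+2) : ℝ) := by
      have : d + 1 + 2 = (d + 2) + 1 := by omega
      rw [this, Nat.factorial_succ]
      push_cast
      ring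
    have hsa : ∑ i : Fin (d+1), a i = a 0 + S' := by
      rw [hS', Fin.sum_univ_succ]
    have hsa2 : ∑ i : Fin (d+1), (a i)^2 = (a 0)^2 + Q' := by
      rw [hQ', Fin.sum_univ_succ]
    rw [hfact, hsa, hsa2, hA, hB, hC]
    have h1 : ((d:ℝ)+1) ≠ 0 := by positivity
    have h2 : ((d:ℝ)+2) ≠ 0 := by positivity
    have h3 : ((d:ℝ)+3) ≠ 0 := by positivity
    have h4 : (Nat.factorial (d+2) : ℝ) ≠ 0 := by
      exact_mod_cast Nat.factorial_ne_zero (d+2)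
    field_simp
    ring

def SimE (d : ℕ) : Set (EuclideanSpace ℝ (Fin d)) := {y | (∀ i, 0 ≤ y i) ∧ ∑ i, y i ≤ 1}

lemma simE_integral (d : ℕ) (c : ℝ) (a : Fin d → ℝ) :
    ∫ y in SimE d, (c + ∑ i, a i * y i) ^ 2 =
      (((d:ℝ)+1)*((d:ℝ)+2)*c^2 + 2*((d:ℝ)+2)*c*(∑ i, a i) + (∑ i, a i)^2 + ∑ i, (a i)^2)
        / (Nat.factorial (d+2) : ℝ) := by
  have mp := EuclideanSpace.volume_preserving_symm_measurableEquiv_toLp (Fin d)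
  have h := mp.setIntegral_preimage_emb
    (MeasurableEquiv.toLp 2 (Fin d → ℝ)).symm.measurableEmbedding
    (fun t : Fin d → ℝ => (c + ∑ i, a i * t i)^2) (Sim d)
  have hpre : (MeasurableEquiv.toLp 2 (Fin d → ℝ)).symm ⁻¹' (Sim d) = SimE d := rfl
  rw [hpre] at h
  rw [← sim_integral d c a, ← h]
  rfl

lemma simE_volume (d : ℕ) :
    (volume (SimE d)).toReal = 1 / (Nat.factorial d : ℝ) := by
  have h := simE_integral d 1 (fun _ => 0)
  simp only [zero_mul, Finset.sum_const_zero, add_zero, one_pow, mul_one, zero_pow,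
    ne_eq, OfNat.ofNat_ne_zero, not_false_eq_true, pow_succ, mul_zero] at h
  rw [setIntegral_const] at h
  rw [smul_eq_mul, mul_one] at h
  rw [← measureReal_def, h]
  have h2 : (Nat.factorial (d+2) : ℝ) = ((d:ℝ)+2) * (((d:ℝ)+1) * (Nat.factorial d : ℝ)) := by
    rw [Nat.factorial_succ, Nat.factorial_succ]
    push_cast
    ring
  rw [h2]
  have h3 : (Nat.factorial d : ℝ) ≠ 0 := by exact_mod_cast Nat.factorial_ne_zero d
  have h4 : ((d:ℝ)+1) ≠ 0 := by positivity
  have h5 : ((d:ℝ)+2) ≠ 0 := by positivity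
  field_simp

set_option maxHeartbeats 1000000 in
/-- `L²`-stability (Riesz stability) of the nodal (barycentric)
basis on a nondegenerate `d`-simplex `τ` in `ℝ^d` with explicit constants:
`(|τ|/((d+1)(d+2))) ∑ uᵢ² ≤ ∫_τ (∑ uᵢ λᵢ)² ≤ (|τ|/(d+1)) ∑ uᵢ²`. -/
theorem nodal_basis_L2_riesz_stability
    (d : ℕ) (hd : 1 ≤ d)
    (x : Fin (d + 1) → EuclideanSpace ℝ (Fin d))
    (hx : AffineIndependent ℝ x)
    (τ : Set (EuclideanSpace ℝ (Fin d)))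
    (hτ : τ = convexHull ℝ (Set.range x))
    (lam : Fin (d + 1) → (EuclideanSpace ℝ (Fin d) →ᵃ[ℝ] ℝ))
    (hlam : ∀ i j, lam i (x j) = if i = j then 1 else 0)
    (u : Fin (d + 1) → ℝ) :
    (volume τ).toReal / (((d : ℝ) + 1) * ((d : ℝ) + 2)) * ∑ i, (u i) ^ 2 ≤
        ∫ y in τ, (∑ i, u i * lam i y) ^ 2 ∧
      ∫ y in τ, (∑ i, u i * lam i y) ^ 2 ≤
        (volume τ).toReal / ((d : ℝ) + 1) * ∑ i, (u i) ^ 2 := by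
  classical
  set w : Fin d → EuclideanSpace ℝ (Fin d) := fun i => x i.castSucc - x (Fin.last d) with hw
  -- linear independence of the edge vectors
  have hxLI : LinearIndependent ℝ w := by
    have h := (affineIndependent_iff_linearIndependent_vsub ℝ x (Fin.last d)).mp hx
    let eqv : Fin d ≃ {j : Fin (d+1) // j ≠ Fin.last d} :=
      { toFun := fun i => ⟨i.castSucc, (Fin.castSucc_lt_last i).ne⟩
        invFun := fun j => (j.1).castPred j.2
        left_inv := fun i => by simp
        right_inv := fun j => by ext; simp }
    have h2 := (linearIndependent_equiv eqv).mpr h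
    have h3 : (fun (j : {j : Fin (d+1) // j ≠ Fin.last d}) => x j.1 -ᵥ x (Fin.last d)) ∘ eqv
        = w := by
      funext i
      simp [eqv, hw, vsub_eq_sub]
      rfl
    rwa [h3] at h2
  -- the continuous linear map
  set Λ : EuclideanSpace ℝ (Fin d) →L[ℝ] EuclideanSpace ℝ (Fin d) :=
    ∑ i, (EuclideanSpace.proj i).smulRight (w i) with hΛ
  have hΛapply : ∀ t : EuclideanSpace ℝ (Fin d), Λ t = ∑ i, t i • w i := by
    intro t
    simp [hΛ, ContinuousLinearMap.sum_apply]
  set f : EuclideanSpace ℝ (Fin d) → EuclideanSpace ℝ (Fin d) :=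
    fun t => x (Fin.last d) + Λ t with hf
  have hΛinj : Function.Injective Λ := by
    intro t1 t2 heq
    have h0 : Λ (t1 - t2) = 0 := by rw [map_sub, heq, sub_self]
    rw [hΛapply] at h0
    have h1 := Fintype.linearIndependent_iff.mp hxLI (fun i => (t1 - t2) i) (by
      simpa using h0)
    have h2 : t1 - t2 = 0 := by
      ext i
      simpa using h1 i
    exact sub_eq_zero.mp h2
  have hfinj : Function.Injective f := by
    intro t1 t2 heq
    apply hΛinj
    have := heq
    simp only [hf] at this
    exact add_left_cancel this
  -- vertices of the corner simplex
  set v : Fin (d+1) → EuclideanSpace ℝ (Fin d) :=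
    Fin.snoc (fun i => EuclideanSpace.single i (1:ℝ)) 0 with hv
  have hΛsingle : ∀ i : Fin d, Λ (EuclideanSpace.single i (1:ℝ)) = w i := by
    intro i
    rw [hΛapply]
    have : ∀ j : Fin d, (EuclideanSpace.single i (1:ℝ)) j • w j
        = if j = i then w j else 0 := by
      intro j
      rw [EuclideanSpace.single_apply]
      by_cases h : j = i <;> simp [h]
    simp only [this]
    simp
  have hfv : ∀ j, f (v j) = x j := by
    intro j
    refine Fin.lastCases ?_ ?_ j
    · simp only [hv, Fin.snoc_last, hf, map_zero, add_zero]
    · intro i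
      simp only [hv, Fin.snoc_castSucc, hf, hΛsingle i, hw]
      abel
  -- the corner simplex is the convex hull of v
  have hSimE_hull : SimE d = convexHull ℝ (Set.range v) := by
    apply Set.Subset.antisymm
    · intro t ht
      obtain ⟨ht0, ht1⟩ := ht
      set wts : Fin (d+1) → ℝ := Fin.snoc (fun i => t i) (1 - ∑ i, t i) with hwts
      have h0 : ∀ j ∈ Finset.univ, 0 ≤ wts j := by
        intro j _
        refine Fin.lastCases ?_ ?_ j
        · simp only [hwts, Fin.snoc_last]; linarith
        · intro i; simp only [hwts, Fin.snoc_castSucc]; exact ht0 i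
      have h1 : ∑ j, wts j = 1 := by
        rw [Fin.sum_univ_castSucc]
        simp only [hwts, Fin.snoc_castSucc, Fin.snoc_last]
        ring
      have hcm : ∑ j, wts j • v j = t := by
        rw [Fin.sum_univ_castSucc]
        simp only [hwts, hv, Fin.snoc_castSucc, Fin.snoc_last, smul_zero, add_zero]
        have hbr := (EuclideanSpace.basisFun (Fin d) ℝ).sum_repr t
        simp only [EuclideanSpace.basisFun_apply, EuclideanSpace.basisFun_repr] at hbr
        exact hbr
      have := Finset.centerMass_mem_convexHull (Finset.univ) h0 (by rw [h1]; norm_num)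
        (fun j _ => Set.mem_range_self (f := v) j)
      rwa [Finset.centerMass_eq_of_sum_1 _ _ h1, hcm] at this
    · apply convexHull_min
      · rintro y ⟨j, rfl⟩
        refine Fin.lastCases ?_ ?_ j
        · simp only [hv, Fin.snoc_last]
          constructor
          · intro i; simp
          · simp
        · intro i
          simp only [hv, Fin.snoc_castSucc]
          constructor
          · intro j
            rw [EuclideanSpace.single_apply]
            by_cases h : j = i <;> simp [h]
          · have : ∑ j, (EuclideanSpace.single i (1:ℝ)) j = 1 := by
              simp [EuclideanSpace.single_apply]
            rw [this]
      · have h1 : ∀ i : Fin d, Convex ℝ {y : EuclideanSpace ℝ (Fin d) | 0 ≤ y i} := by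
          intro i
          exact convex_halfSpace_ge ⟨fun a b => rfl, fun r a => rfl⟩ 0
        have h2 : Convex ℝ {y : EuclideanSpace ℝ (Fin d) | ∑ i, y i ≤ 1} :=
          convex_halfSpace_le ⟨fun a b => by simp [Finset.sum_add_distrib],
            fun r a => by simp [Finset.mul_sum]⟩ 1
        have : SimE d = (⋂ i, {y : EuclideanSpace ℝ (Fin d) | 0 ≤ y i})
            ∩ {y | ∑ i, y i ≤ 1} := by
          ext y; simp [SimE]
        rw [this]
        exact (convex_iInter fun i => h1 i).inter h2
  -- τ is the image of the corner simplex
  set φ : EuclideanSpace ℝ (Fin d) →ᵃ[ℝ] EuclideanSpace ℝ (Fin d) :=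
    { toFun := f
      linear := (Λ : EuclideanSpace ℝ (Fin d) →ₗ[ℝ] EuclideanSpace ℝ (Fin d))
      map_vadd' := fun p q => by
        simp only [hf, ContinuousLinearMap.coe_coe, vadd_eq_add, map_add]
        abel } with hφ
  have himg : τ = f '' SimE d := by
    rw [hτ, hSimE_hull]
    have h1 : f '' (convexHull ℝ (Set.range v)) = convexHull ℝ (f '' Set.range v) :=
      AffineMap.image_convexHull φ (Set.range v)
    rw [h1, ← Set.range_comp]
    have : f ∘ v = x := funext hfv
    rw [this]
  -- barycentric coordinates composed with f
  set c : ℝ := u (Fin.last d) with hc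
  set aa : Fin d → ℝ := fun i => u i.castSucc - u (Fin.last d) with haa
  have hlamf : ∀ t : EuclideanSpace ℝ (Fin d),
      (∑ j, u j * lam j (f t)) = c + ∑ i, aa i * t i := by
    intro t
    have hlin : ∀ (j : Fin (d+1)) (i : Fin d),
        (lam j).linear (w i) = lam j (x i.castSucc) - lam j (x (Fin.last d)) := by
      intro j i
      have h1 : x i.castSucc = w i +ᵥ x (Fin.last d) := by
        simp only [hw, vadd_eq_add]
        abel
      rw [h1, AffineMap.map_vadd]
      simp
    have hlamft : ∀ j : Fin (d+1), lam j (f t)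
        = lam j (x (Fin.last d))
          + ∑ i, t i * (lam j (x i.castSucc) - lam j (x (Fin.last d))) := by
      intro j
      have h1 : f t = Λ t +ᵥ x (Fin.last d) := by
        simp only [hf, vadd_eq_add]
        abel
      rw [h1, AffineMap.map_vadd, hΛapply]
      rw [map_sum]
      simp only [_root_.map_smul, smul_eq_mul, vadd_eq_add]
      rw [add_comm]
      congr 1
      exact Finset.sum_congr rfl fun i _ => by rw [hlin j i]
    calc ∑ j, u j * lam j (f t)
        = ∑ j, (u j * lam j (x (Fin.last d))
          + ∑ i, t i * (u j * lam j (x i.castSucc) - u j * lam j (x (Fin.last d)))) := by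
          refine Finset.sum_congr rfl fun j _ => ?_
          rw [hlamft j, mul_add, Finset.mul_sum]
          congr 1
          exact Finset.sum_congr rfl fun i _ => by ring
      _ = (∑ j, u j * lam j (x (Fin.last d)))
          + ∑ i, t i * ((∑ j, u j * lam j (x i.castSucc)) - ∑ j, u j * lam j (x (Fin.last d)))
          := by
          rw [Finset.sum_add_distrib, Finset.sum_comm]
          congr 1
          refine Finset.sum_congr rfl fun i _ => ?_
          rw [← Finset.mul_sum, Finset.sum_sub_distrib]
      _ = c + ∑ i, aa i * t i := by
          have hT : ∀ k : Fin (d+1), (∑ j, u j * lam j (x k)) = u k := by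
            intro k
            have : ∀ j, u j * lam j (x k) = if j = k then u j else 0 := by
              intro j
              rw [hlam j k]
              by_cases h : j = k <;> simp [h]
            simp only [this]
            simp
          rw [hc]
          congr 1
          · exact hT (Fin.last d)
          · refine Finset.sum_congr rfl fun i _ => ?_
            simp only [hT, haa]
            ring
  -- change of variables
  have hmeasSimE : MeasurableSet (SimE d) :=
    (MeasurableEquiv.toLp 2 (Fin d → ℝ)).symm.measurable (measurableSet_Sim d)
  have hCoV : ∀ g : EuclideanSpace ℝ (Fin d) → ℝ,
      ∫ y in f '' SimE d, g y = |Λ.det| * ∫ t in SimE d, g (f t) := by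
    intro g
    have hfd : ∀ t ∈ SimE d, HasFDerivWithinAt f Λ (SimE d) t := fun t _ =>
      ((Λ.hasFDerivAt.const_add (x (Fin.last d)))).hasFDerivWithinAt
    rw [integral_image_eq_integral_abs_det_fderiv_smul volume hmeasSimE hfd hfinj.injOn g]
    simp only [smul_eq_mul]
    exact integral_const_mul _ _
  -- volume of τ
  have hfactd : (Nat.factorial d : ℝ) ≠ 0 := by exact_mod_cast Nat.factorial_ne_zero d
  have hvol : (volume τ).toReal = |Λ.det| * (1 / (Nat.factorial d : ℝ)) := by
    have h1 := hCoV (fun _ => (1:ℝ))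
    have h2 : ∫ y in τ, (1:ℝ) = (volume τ).toReal := by
      rw [setIntegral_const, smul_eq_mul, mul_one, measureReal_def]
    rw [← h2, himg, h1, setIntegral_const, smul_eq_mul, mul_one, measureReal_def, simE_volume d]
  have hI : ∫ y in τ, (∑ i, u i * lam i y) ^ 2
      = |Λ.det| * ((((d:ℝ)+1)*((d:ℝ)+2)*c^2 + 2*((d:ℝ)+2)*c*(∑ i, aa i) + (∑ i, aa i)^2
        + ∑ i, (aa i)^2) / (Nat.factorial (d+2) : ℝ)) := by
    rw [himg, hCoV]
    congr 1
    simp only [hlamf]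
    exact simE_integral d c aa
  have hkey : ((d:ℝ)+1)*((d:ℝ)+2)*c^2 + 2*((d:ℝ)+2)*c*(∑ i, aa i) + (∑ i, aa i)^2
      + ∑ i, (aa i)^2 = (∑ i, (u i)^2) + (∑ i, u i)^2 := by
    have h1 : ∑ i : Fin (d+1), u i = (∑ i : Fin d, u i.castSucc) + u (Fin.last d) :=
      Fin.sum_univ_castSucc u
    have h2 : ∑ i : Fin (d+1), (u i)^2
        = (∑ i : Fin d, (u i.castSucc)^2) + (u (Fin.last d))^2 :=
      Fin.sum_univ_castSucc (fun i => (u i)^2)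
    have h3 : ∑ i : Fin d, aa i = (∑ i : Fin d, u i.castSucc) - (d:ℝ) * c := by
      simp only [haa, hc]
      rw [Finset.sum_sub_distrib, Finset.sum_const, Finset.card_univ, Fintype.card_fin,
        nsmul_eq_mul]
    have h4 : ∑ i : Fin d, (aa i)^2 = (∑ i : Fin d, (u i.castSucc)^2)
        - 2*c*(∑ i : Fin d, u i.castSucc) + (d:ℝ) * c^2 := by
      have hsq : ∀ i : Fin d, (u i.castSucc - u (Fin.last d))^2
          = (u i.castSucc)^2 - 2*u (Fin.last d)*u i.castSucc + (u (Fin.last d))^2 :=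
        fun i => by ring
      simp only [haa, hsq]
      rw [Finset.sum_add_distrib, Finset.sum_sub_distrib, ← Finset.mul_sum,
        Finset.sum_const, Finset.card_univ, Fintype.card_fin, nsmul_eq_mul, hc]
    rw [h1, h2, h3, h4]
    ring
  set V := (volume τ).toReal with hV
  have hVnn : 0 ≤ V := ENNReal.toReal_nonneg
  have hdet : |Λ.det| = V * (Nat.factorial d : ℝ) := by
    rw [hvol]
    field_simp
  have hfact2 : (Nat.factorial (d+2) : ℝ)
      = ((d:ℝ)+2)*(((d:ℝ)+1)*(Nat.factorial d : ℝ)) := by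
    rw [Nat.factorial_succ, Nat.factorial_succ]
    push_cast
    ring
  have hpos1 : (0:ℝ) < ((d:ℝ)+1) := by positivity
  have hpos2 : (0:ℝ) < ((d:ℝ)+2) := by positivity
  have hIval : ∫ y in τ, (∑ i, u i * lam i y) ^ 2
      = V * ((∑ i, (u i)^2) + (∑ i, u i)^2) / (((d:ℝ)+1)*((d:ℝ)+2)) := by
    rw [hI, hkey, hdet, hfact2]
    field_simp
  have hU2 : (∑ i, u i)^2 ≤ ((d:ℝ)+1) * ∑ i, (u i)^2 := by
    have h := sq_sum_le_card_mul_sum_sq (s := (Finset.univ : Finset (Fin (d+1)))) (f := u)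
    rw [Finset.card_univ, Fintype.card_fin] at h
    exact_mod_cast h
  have hSnn : 0 ≤ ∑ i, (u i)^2 :=
    Finset.sum_nonneg fun i _ => sq_nonneg (u i)
  constructor
  · rw [hIval, div_mul_eq_mul_div, div_le_div_iff₀ (by positivity) (by positivity)]
    nlinarith [mul_nonneg hVnn (sq_nonneg (∑ i, u i)), mul_nonneg hVnn hSnn,
      mul_pos hpos1 hpos2]
  · rw [hIval, div_mul_eq_mul_div, div_le_div_iff₀ (by positivity) hpos1]
    nlinarith [mul_le_mul_of_nonneg_left (mul_le_mul_of_nonneg_left hU2 hVnn) hpos1.le,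
      mul_nonneg hVnn hSnn]
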